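/- arXiv:2012.07914 — 3 statements merged into one kernel-verified Lean document; each statement's English description precedes it below -/
import Mathlib

section
/- Identifying homogeneous quadratic polynomials f on ℝ^n with symmetric matrices M_f = Hess(f)/2 (so f(x) = xᵀM_f x), one has ⟨∇f, ∇g⟩(x) = ⟨(2M_f·2M_g + 2M_g·2M_f)/2 · x, x⟩; in particular a subalgebra generated by quadratics containing r² is Laplacian if and only if its degree-2 part is closed under the Jordan product M∙N = (MN + NM)/2. -/
open MvPolynomial

/-- The Laplacian Δ = Σᵢ ∂²/∂xᵢ². -/
noncomputable def lap {σ : Type*} [Fintype σ] (f : MvPolynomial σ ℝ) :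
    MvPolynomial σ ℝ :=
  ∑ i, pderiv i (pderiv i f)

/-- ⟨∇f, ∇g⟩ = Σᵢ (∂f/∂xᵢ)(∂g/∂xᵢ). -/
noncomputable def gradInner {σ : Type*} [Fintype σ] (f g : MvPolynomial σ ℝ) :
    MvPolynomial σ ℝ :=
  ∑ i, pderiv i f * pderiv i g

/-- r² = Σᵢ xᵢ². -/
noncomputable def rsq {σ : Type*} [Fintype σ] : MvPolynomial σ ℝ := ∑ i, X i ^ 2

/-- The quadratic polynomial x ↦ ⟨Mx, x⟩ = xᵀ M x associated to a matrix M. -/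
noncomputable def quad {n : ℕ} (M : Matrix (Fin n) (Fin n) ℝ) :
    MvPolynomial (Fin n) ℝ :=
  ∑ i, ∑ j, C (M i j) * X i * X j

/- ### Auxiliary lemmas -/

lemma pderiv_quad {n : ℕ} (M : Matrix (Fin n) (Fin n) ℝ) (k : Fin n) :
    pderiv k (quad M) = ∑ j, C (M k j + M j k) * X j := by
  have h : ∀ i j : Fin n, pderiv k (C (M i j) * X i * X j)
      = (if i = k then C (M i j) * X j else 0) + (if j = k then C (M i j) * X i else 0) := by
    intro i j
    rw [mul_assoc, pderiv_mul, pderiv_C, pderiv_mul, pderiv_X, pderiv_X]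
    rcases eq_or_ne i k with h1 | h1 <;> rcases eq_or_ne j k with h2 | h2 <;>
      [skip; skip; skip; skip] <;> simp [h1, h2, Pi.single_apply, mul_comm] <;> ring
  unfold quad
  rw [map_sum]
  simp_rw [map_sum, h, Finset.sum_add_distrib, Finset.sum_ite_eq', Finset.mem_univ, if_true]
  rw [Finset.sum_comm]
  simp_rw [Finset.sum_ite_eq', Finset.mem_univ, if_true]
  rw [← Finset.sum_add_distrib]
  refine Finset.sum_congr rfl fun j _ => ?_
  rw [C_add, add_mul]

lemma quad_add {n : ℕ} (M N : Matrix (Fin n) (Fin n) ℝ) :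
    quad (M + N) = quad M + quad N := by
  unfold quad
  rw [← Finset.sum_add_distrib]
  refine Finset.sum_congr rfl fun i _ => ?_
  rw [← Finset.sum_add_distrib]
  refine Finset.sum_congr rfl fun j _ => ?_
  simp only [Matrix.add_apply, C_add]; ring

lemma quad_smul {n : ℕ} (c : ℝ) (M : Matrix (Fin n) (Fin n) ℝ) :
    quad (c • M) = C c * quad M := by
  unfold quad
  rw [Finset.mul_sum]
  refine Finset.sum_congr rfl fun i _ => ?_
  rw [Finset.mul_sum]
  refine Finset.sum_congr rfl fun j _ => ?_
  simp only [Matrix.smul_apply, smul_eq_mul, C_mul]; ring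

lemma quad_transpose {n : ℕ} (M : Matrix (Fin n) (Fin n) ℝ) :
    quad M.transpose = quad M := by
  unfold quad
  rw [Finset.sum_comm]
  refine Finset.sum_congr rfl fun i _ => Finset.sum_congr rfl fun j _ => ?_
  simp only [Matrix.transpose_apply]; ring

lemma gradInner_quad {n : ℕ} (M N : Matrix (Fin n) (Fin n) ℝ) (hM : M.IsSymm) (hN : N.IsSymm) :
    gradInner (quad M) (quad N) = quad ((4:ℝ) • (M * N)) := by
  unfold gradInner
  simp_rw [pderiv_quad, Finset.sum_mul_sum]
  rw [Finset.sum_comm]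
  unfold quad
  refine Finset.sum_congr rfl fun j _ => ?_
  rw [Finset.sum_comm]
  refine Finset.sum_congr rfl fun l _ => ?_
  have h1 : ∀ k : Fin n, C (M k j + M j k) * X j * (C (N k l + N l k) * X l)
      = C (M j k * N k l * 4) * (X j * X l) := by
    intro k
    rw [hM.apply k j, hN.apply k l, C_mul, C_mul, C_add, C_add, map_ofNat]
    ring
  have h2 : (∑ k, M j k * N k l * 4) = ((4:ℝ) • (M * N)) j l := by
    simp only [Matrix.mul_apply, Matrix.smul_apply, smul_eq_mul]
    rw [Finset.mul_sum]
    exact Finset.sum_congr rfl fun k _ => by ring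
  simp_rw [h1, ← Finset.sum_mul, ← map_sum, h2, mul_assoc]

lemma C_half_two {n : ℕ} : (C ((1:ℝ)/2) * 2 : MvPolynomial (Fin n) ℝ) = 1 := by
  rw [← map_ofNat (C : ℝ →+* MvPolynomial (Fin n) ℝ) 2, ← C_mul]
  norm_num

lemma gradInner_quad_eq {n : ℕ} (M N : Matrix (Fin n) (Fin n) ℝ)
    (hM : M.IsSymm) (hN : N.IsSymm) :
    gradInner (quad M) (quad N) = C (4:ℝ) * quad (((1:ℝ)/2) • (M * N + N * M)) := by
  have hNM : quad (N * M) = quad (M * N) := by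
    rw [← quad_transpose (M * N)]
    congr 1
    rw [Matrix.transpose_mul, hM, hN]
  rw [gradInner_quad M N hM hN, quad_smul, quad_smul, quad_add, hNM, ← two_mul,
    ← mul_assoc (C ((1:ℝ)/2)), C_half_two, one_mul]

lemma quad_stdBasis {n : ℕ} (i j : Fin n) (c : ℝ) :
    quad (Matrix.single i j c) = C c * X i * X j := by
  unfold quad
  have h : ∀ a b : Fin n, C (Matrix.single i j c a b) * X a * X b
      = if a = i then (if b = j then C c * X a * X b else 0) else 0 := by
    intro a b
    rcases eq_or_ne a i with rfl | h1
    · rcases eq_or_ne b j with rfl | h2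
      · simp [Matrix.single]
      · simp [Matrix.single, h2, Ne.symm h2]
    · simp [Matrix.single, h1, Ne.symm h1]
  calc (∑ a, ∑ b, C (Matrix.single i j c a b) * X a * X b)
      = ∑ a, (if a = i then C c * X a * X j else 0) := by
        refine Finset.sum_congr rfl fun a _ => ?_
        simp_rw [h]
        split_ifs with hh
        · simp_rw [Finset.sum_ite_eq', Finset.mem_univ, if_true]
        · simp
    _ = C c * X i * X j := by
        simp_rw [Finset.sum_ite_eq', Finset.mem_univ, if_true]

lemma monomial_pair {n : ℕ} (i j : Fin n) (c : ℝ) :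
    (monomial (Finsupp.single i 1 + Finsupp.single j 1) c : MvPolynomial (Fin n) ℝ)
      = C c * X i * X j := by
  rw [X, X, C_apply, mul_assoc, monomial_mul, monomial_mul, mul_one, mul_one, zero_add]

lemma degree_two {n : ℕ} (d : Fin n →₀ ℕ) (h : d.degree = 2) :
    ∃ i j, d = Finsupp.single i 1 + Finsupp.single j 1 := by
  classical
  have hadd : ∀ a b : Fin n →₀ ℕ, (a + b).degree = a.degree + b.degree := by
    intro a b; simp only [Finsupp.degree_eq_weight_one]; exact map_add _ _ _
  have hsingle : ∀ i : Fin n, (Finsupp.single i (1:ℕ)).degree = 1 := by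
    intro i
    simp [Finsupp.degree_apply, Finsupp.support_single_ne_zero _ one_ne_zero]
  have h0 : d ≠ 0 := by
    intro h0; rw [h0, map_zero] at h; exact two_ne_zero h.symm
  obtain ⟨i, hi⟩ := DFunLike.ne_iff.mp h0
  simp only [Finsupp.coe_zero, Pi.zero_apply] at hi
  have hle : Finsupp.single i 1 ≤ d := Finsupp.single_le_iff.mpr (by omega)
  obtain ⟨e, he⟩ : ∃ e, d = e + Finsupp.single i 1 := ⟨d - Finsupp.single i 1,
    (tsub_add_cancel_of_le hle).symm⟩
  have hdeg : e.degree = 1 := by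
    rw [he, hadd, hsingle] at h; omega
  have he0 : e ≠ 0 := by
    intro h0; rw [h0, map_zero] at hdeg; exact one_ne_zero hdeg.symm
  obtain ⟨j, hj⟩ := DFunLike.ne_iff.mp he0
  simp only [Finsupp.coe_zero, Pi.zero_apply] at hj
  have hle2 : Finsupp.single j 1 ≤ e := Finsupp.single_le_iff.mpr (by omega)
  obtain ⟨f, hf⟩ : ∃ f, e = f + Finsupp.single j 1 := ⟨e - Finsupp.single j 1,
    (tsub_add_cancel_of_le hle2).symm⟩
  have hfd : f.degree = 0 := by rw [hf, hadd, hsingle] at hdeg; omega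
  have hf0 : f = 0 := (Finsupp.degree_eq_zero_iff f).mp hfd
  exact ⟨j, i, by rw [he, hf, hf0, zero_add]⟩

lemma exists_quad {n : ℕ} (f : MvPolynomial (Fin n) ℝ) (hf : f.IsHomogeneous 2) :
    ∃ M : Matrix (Fin n) (Fin n) ℝ, M.IsSymm ∧ quad M = f := by
  let T : Submodule ℝ (MvPolynomial (Fin n) ℝ) :=
    { carrier := {g | ∃ M : Matrix (Fin n) (Fin n) ℝ, M.IsSymm ∧ quad M = g}
      zero_mem' := ⟨0, Matrix.isSymm_zero, by simp [quad]⟩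
      add_mem' := by rintro a b ⟨M, hM, rfl⟩ ⟨N, hN, rfl⟩; exact ⟨M + N, hM.add hN, quad_add M N⟩
      smul_mem' := by
        rintro c a ⟨M, hM, rfl⟩
        exact ⟨c • M, hM.smul c, by rw [quad_smul, ← smul_eq_C_mul]⟩ }
  suffices h : f ∈ T by exact h
  rw [f.as_sum]
  refine Submodule.sum_mem _ fun d hd => ?_
  have hdeg : d.degree = 2 := by
    rw [Finsupp.degree_eq_weight_one]
    exact hf (mem_support_iff.mp hd)
  obtain ⟨i, j, rfl⟩ := degree_two d hdeg
  rw [monomial_pair]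
  set c := coeff (Finsupp.single i 1 + Finsupp.single j 1) f
  refine ⟨((1:ℝ)/2) • (Matrix.single i j c + Matrix.single j i c), ?_, ?_⟩
  · apply Matrix.IsSymm.smul
    unfold Matrix.IsSymm
    ext a b
    simp only [Matrix.transpose_apply, Matrix.add_apply, Matrix.single, Matrix.of_apply]
    rw [add_comm]
    congr 1 <;> simp [and_comm]
  · rw [quad_smul, quad_add, quad_stdBasis, quad_stdBasis,
      show C c * X j * X i = C c * X i * X j by ring, ← two_mul, ← mul_assoc,
      C_half_two, one_mul]

lemma lap_mul {σ : Type*} [Fintype σ] (f g : MvPolynomial σ ℝ) :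
    lap (f * g) = lap f * g + f * lap g + 2 * gradInner f g := by
  unfold lap gradInner
  rw [Finset.sum_mul, Finset.mul_sum, Finset.mul_sum, ← Finset.sum_add_distrib,
    ← Finset.sum_add_distrib]
  refine Finset.sum_congr rfl fun i _ => ?_
  simp only [pderiv_mul, map_add]
  ring

lemma lap_add {σ : Type*} [Fintype σ] (f g : MvPolynomial σ ℝ) :
    lap (f + g) = lap f + lap g := by
  unfold lap
  rw [← Finset.sum_add_distrib]
  simp [map_add]

lemma lap_C {σ : Type*} [Fintype σ] (r : ℝ) : lap (C r : MvPolynomial σ ℝ) = 0 := by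
  simp [lap, pderiv_C]

lemma gradInner_comm {σ : Type*} [Fintype σ] (f g : MvPolynomial σ ℝ) :
    gradInner f g = gradInner g f := by
  unfold gradInner
  exact Finset.sum_congr rfl fun i _ => mul_comm _ _

lemma gradInner_C_left {σ : Type*} [Fintype σ] (r : ℝ) (g : MvPolynomial σ ℝ) :
    gradInner (C r) g = 0 := by
  simp [gradInner, pderiv_C]

lemma gradInner_add_left {σ : Type*} [Fintype σ] (f g h : MvPolynomial σ ℝ) :
    gradInner (f + g) h = gradInner f h + gradInner g h := by
  unfold gradInner
  rw [← Finset.sum_add_distrib]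
  simp [map_add, add_mul]

lemma gradInner_mul_left {σ : Type*} [Fintype σ] (f g h : MvPolynomial σ ℝ) :
    gradInner (f * g) h = f * gradInner g h + g * gradInner f h := by
  unfold gradInner
  rw [Finset.mul_sum, Finset.mul_sum, ← Finset.sum_add_distrib]
  refine Finset.sum_congr rfl fun i _ => ?_
  rw [pderiv_mul]
  ring

lemma gradInner_add_right {σ : Type*} [Fintype σ] (f g h : MvPolynomial σ ℝ) :
    gradInner f (g + h) = gradInner f g + gradInner f h := by
  rw [gradInner_comm, gradInner_add_left, gradInner_comm g, gradInner_comm h]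

lemma gradInner_mul_right {σ : Type*} [Fintype σ] (f g h : MvPolynomial σ ℝ) :
    gradInner f (g * h) = g * gradInner f h + h * gradInner f g := by
  rw [gradInner_comm, gradInner_mul_left, gradInner_comm h, gradInner_comm g]

lemma gradInner_C_right {σ : Type*} [Fintype σ] (f : MvPolynomial σ ℝ) (r : ℝ) :
    gradInner f (C r) = 0 := by
  rw [gradInner_comm, gradInner_C_left]

lemma lap_quad {n : ℕ} (M : Matrix (Fin n) (Fin n) ℝ) :
    lap (quad M) = C (∑ i, (M i i + M i i)) := by
  unfold lap
  simp_rw [pderiv_quad, map_sum]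
  refine Finset.sum_congr rfl fun k _ => ?_
  have h : ∀ j : Fin n, pderiv k (C (M k j + M j k) * X j)
      = if j = k then C (M k k + M k k) else 0 := by
    intro j
    rcases eq_or_ne j k with rfl | h
    · simp [pderiv_mul, pderiv_C, pderiv_X]
    · simp [pderiv_mul, pderiv_C, pderiv_X_of_ne h, h]
  simp_rw [h, Finset.sum_ite_eq', Finset.mem_univ, if_true]

/-- Identifying quadratic forms f(x) = xᵀMx with symmetric matrices,
⟨∇f,∇g⟩ is the quadratic form of (2M·2N + 2N·2M)/2; consequently a subalgebra
containing r² and generated by its quadratics is Laplacian iff its degree-2 part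
is closed under the Jordan product M∙N = (MN+NM)/2. -/
theorem gradInner_quad_jordan {n : ℕ} :
    (∀ M N : Matrix (Fin n) (Fin n) ℝ, M.IsSymm → N.IsSymm →
      gradInner (quad M) (quad N) =
        quad (((1 : ℝ) / 2) • (((2:ℝ) • M) * ((2:ℝ) • N) + ((2:ℝ) • N) * ((2:ℝ) • M)))) ∧
    (∀ A : Subalgebra ℝ (MvPolynomial (Fin n) ℝ), rsq ∈ A →
      A = Algebra.adjoin ℝ {f | f ∈ A ∧ f.IsHomogeneous 2} →
      ((∀ f ∈ A, lap f ∈ A) ↔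
        ∀ M N : Matrix (Fin n) (Fin n) ℝ, M.IsSymm → N.IsSymm →
          quad M ∈ A → quad N ∈ A →
          quad (((1 : ℝ) / 2) • (M * N + N * M)) ∈ A)) := by
  constructor
  · -- Part 1
    intro M N hM hN
    have hmat : ((1:ℝ)/2) • (((2:ℝ) • M) * ((2:ℝ) • N) + ((2:ℝ) • N) * ((2:ℝ) • M))
        = (4:ℝ) • (((1:ℝ)/2) • (M * N + N * M)) := by
      rw [smul_mul_assoc, smul_mul_assoc, mul_smul_comm, mul_smul_comm]
      module
    rw [gradInner_quad_eq M N hM hN, hmat, quad_smul, quad_smul]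
    rw [quad_smul]
  · -- Part 2
    intro A hrsq hA
    have hC : ∀ r : ℝ, (C r : MvPolynomial (Fin n) ℝ) ∈ A := fun r => by
      have := A.algebraMap_mem r
      rwa [MvPolynomial.algebraMap_eq] at this
    constructor
    · -- Laplacian closure → Jordan closure
      intro hlap M N hM hN hMA hNA
      have h1 : gradInner (quad M) (quad N) ∈ A := by
        have h3 : (2 : MvPolynomial (Fin n) ℝ) * gradInner (quad M) (quad N)
            = lap (quad M * quad N) - lap (quad M) * quad N - quad M * lap (quad N) := by
          rw [lap_mul]; ring
        have h2 : gradInner (quad M) (quad N)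
            = C ((1:ℝ)/2) * (2 * gradInner (quad M) (quad N)) := by
          rw [← mul_assoc, C_half_two, one_mul]
        rw [h2, h3]
        exact A.mul_mem (hC _) (A.sub_mem (A.sub_mem (hlap _ (A.mul_mem hMA hNA))
          (A.mul_mem (hlap _ hMA) hNA)) (A.mul_mem hMA (hlap _ hNA)))
      have h4 : quad (((1:ℝ)/2) • (M * N + N * M))
          = C ((1:ℝ)/4) * gradInner (quad M) (quad N) := by
        rw [gradInner_quad_eq M N hM hN, ← mul_assoc, ← C_mul]
        norm_num
      rw [h4]
      exact A.mul_mem (hC _) h1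
    · -- Jordan closure → Laplacian closure
      intro hJ f hf
      rw [hA] at hf
      set S := {f : MvPolynomial (Fin n) ℝ | f ∈ A ∧ f.IsHomogeneous 2} with hS
      have key : ∀ f ∈ S, ∀ g, g ∈ Algebra.adjoin ℝ S → gradInner f g ∈ A := by
        intro f hfS g hg
        induction hg using Algebra.adjoin_induction with
        | mem x hx =>
            obtain ⟨M, hM, rfl⟩ := exists_quad f hfS.2
            obtain ⟨N, hN, rfl⟩ := exists_quad x hx.2
            rw [gradInner_quad_eq M N hM hN]
            exact A.mul_mem (hC _) (hJ M N hM hN hfS.1 hx.1)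
        | algebraMap r =>
            rw [MvPolynomial.algebraMap_eq, gradInner_C_right]
            exact A.zero_mem
        | add x y hx hy ihx ihy =>
            rw [gradInner_add_right]
            exact A.add_mem ihx ihy
        | mul x y hx hy ihx ihy =>
            rw [gradInner_mul_right]
            have hxA : x ∈ A := by rw [hA]; exact hx
            have hyA : y ∈ A := by rw [hA]; exact hy
            exact A.add_mem (A.mul_mem hxA ihy) (A.mul_mem hyA ihx)
      have main : ∀ f, f ∈ Algebra.adjoin ℝ S →
          lap f ∈ A ∧ ∀ g, g ∈ Algebra.adjoin ℝ S → gradInner f g ∈ A := by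
        intro f hf
        induction hf using Algebra.adjoin_induction with
        | mem x hx =>
            refine ⟨?_, key x hx⟩
            obtain ⟨M, hM, rfl⟩ := exists_quad x hx.2
            rw [lap_quad]
            exact hC _
        | algebraMap r =>
            refine ⟨by rw [MvPolynomial.algebraMap_eq, lap_C]; exact A.zero_mem, fun g hg => ?_⟩
            rw [MvPolynomial.algebraMap_eq, gradInner_C_left]
            exact A.zero_mem
        | add x y hx hy ihx ihy =>
            refine ⟨by rw [lap_add]; exact A.add_mem ihx.1 ihy.1, fun g hg => ?_⟩
            rw [gradInner_add_left]
            exact A.add_mem (ihx.2 g hg) (ihy.2 g hg)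
        | mul x y hx hy ihx ihy =>
            have hxA : x ∈ A := by rw [hA]; exact hx
            have hyA : y ∈ A := by rw [hA]; exact hy
            constructor
            · rw [lap_mul, two_mul]
              exact A.add_mem (A.add_mem (A.mul_mem ihx.1 hyA) (A.mul_mem hxA ihy.1))
                (A.add_mem (ihx.2 y hy) (ihx.2 y hy))
            · intro g hg
              rw [gradInner_mul_left]
              exact A.add_mem (A.mul_mem hxA (ihy.2 g hg)) (A.mul_mem hyA (ihx.2 g hg))
      exact (main f hf).1
end

section
/- With f_{ij}(v₁,…,v_k) = ⟨vᵢ,vⱼ⟩ and h_S the determinant polynomials on (ℝ^n)^k (S an n-element subset of {1,…,k}): ⟨∇f_{ij}, ∇h_S⟩ = 0 if |S ∩ {i,j}| ∈ {0,2}, and ⟨∇f_{ij}, ∇h_S⟩ = ± h_{(S∖{i})∪{j}} if i ∈ S and j ∉ S. -/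
open MvPolynomial

/-- f_{ij}(v₁,…,v_k) = ⟨vᵢ,vⱼ⟩ as a polynomial on (ℝⁿ)ᵏ. -/
noncomputable def fpair {n k : ℕ} (i j : Fin k) :
    MvPolynomial (Fin k × Fin n) ℝ :=
  ∑ a : Fin n, X (i, a) * X (j, a)

/-- h_S(v₁,…,v_k) = det(v_{s₁},…,v_{sₙ}) for an injective s : Fin n → Fin k. -/
noncomputable def hdet {n k : ℕ} (s : Fin n → Fin k) :
    MvPolynomial (Fin k × Fin n) ℝ :=
  Matrix.det (Matrix.of fun a b : Fin n => (X (s b, a) : MvPolynomial (Fin k × Fin n) ℝ))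

lemma pderiv_finset_prod {σ ι : Type*} [DecidableEq σ] [DecidableEq ι] (d : σ)
    (t : Finset ι) (f : ι → MvPolynomial σ ℝ) :
    pderiv d (∏ i ∈ t, f i) = ∑ i ∈ t, (∏ j ∈ t.erase i, f j) * pderiv d (f i) := by
  induction t using Finset.induction_on with
  | empty => simp
  | @insert a t ha ih =>
    rw [Finset.prod_insert ha, pderiv_mul, ih, Finset.sum_insert ha, Finset.erase_insert ha,
      Finset.mul_sum]
    congr 1
    · ring
    · refine Finset.sum_congr rfl fun b hb => ?_
      rw [Finset.erase_insert_of_ne (by rintro rfl; exact ha hb), Finset.prod_insert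
        (fun h => ha (Finset.mem_of_mem_erase h))]
      ring

lemma pderiv_det {σ : Type*} [DecidableEq σ] {n : ℕ} (d : σ)
    (M : Matrix (Fin n) (Fin n) (MvPolynomial σ ℝ)) :
    pderiv d M.det = ∑ b, (M.updateCol b (fun a => pderiv d (M a b))).det := by
  rw [Matrix.det_apply, map_sum]
  simp only [Units.smul_def, map_zsmul, pderiv_finset_prod, Finset.smul_sum]
  rw [Finset.sum_comm]
  refine Finset.sum_congr rfl fun b _ => ?_
  rw [Matrix.det_apply]
  refine Finset.sum_congr rfl fun σp _ => ?_
  rw [Units.smul_def]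
  congr 1
  rw [← Finset.mul_prod_erase Finset.univ _ (Finset.mem_univ b)]
  rw [Matrix.updateCol_apply, if_pos rfl]
  rw [mul_comm]
  congr 1
  refine Finset.prod_congr rfl fun j hj => ?_
  rw [Matrix.updateCol_apply, if_neg (Finset.ne_of_mem_erase hj)]

lemma det_updateColumn_finset_sum {R : Type*} [CommRing R] {n : ℕ}
    (A : Matrix (Fin n) (Fin n) R) (b : Fin n) {ι : Type*} (t : Finset ι)
    (v : ι → Fin n → R) :
    (A.updateCol b (∑ i ∈ t, v i)).det = ∑ i ∈ t, (A.updateCol b (v i)).det := by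
  classical
  induction t using Finset.induction_on with
  | empty =>
    rw [Finset.sum_empty, Finset.sum_empty]
    exact Matrix.det_eq_zero_of_column_eq_zero b (fun i => by simp [Matrix.updateCol_apply])
  | @insert a t ha ih =>
    rw [Finset.sum_insert ha, Finset.sum_insert ha, ← ih]
    exact Matrix.det_updateCol_add A b _ _

/-- the matrix of variables -/
noncomputable def matv {n k : ℕ} (s : Fin n → Fin k) :
    Matrix (Fin n) (Fin n) (MvPolynomial (Fin k × Fin n) ℝ) :=
  Matrix.of fun a b : Fin n => (X (s b, a) : MvPolynomial (Fin k × Fin n) ℝ)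

noncomputable def cofac {n k : ℕ} (s : Fin n → Fin k) (b a₀ : Fin n) :
    MvPolynomial (Fin k × Fin n) ℝ :=
  ((matv s).updateCol b (fun a => if a = a₀ then 1 else 0)).det

lemma hdet_eq {n k : ℕ} (s : Fin n → Fin k) : hdet s = (matv s).det := rfl

lemma key1 {n k : ℕ} (s : Fin n → Fin k) (c : Fin k) (a₀ : Fin n) :
    pderiv (c, a₀) (hdet s) = ∑ b, if s b = c then cofac s b a₀ else 0 := by
  rw [hdet_eq, pderiv_det]
  refine Finset.sum_congr rfl fun b _ => ?_
  by_cases h : s b = c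
  · rw [if_pos h]
    have hc : (fun a => pderiv ((c, a₀)) (matv s a b))
        = fun a => if a = a₀ then (1 : MvPolynomial (Fin k × Fin n) ℝ) else 0 := by
      funext a
      show pderiv (c, a₀) (X (s b, a)) = _
      rw [pderiv_X]
      simp [Prod.ext_iff, h, Pi.single_apply]
    rw [hc]
    rfl
  · rw [if_neg h]
    refine Matrix.det_eq_zero_of_column_eq_zero b fun a => ?_
    rw [Matrix.updateCol_apply, if_pos rfl]
    show pderiv (c, a₀) (X (s b, a)) = 0
    rw [pderiv_X]
    simp [Pi.single_apply, Prod.ext_iff, h]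

lemma key2 {n k : ℕ} (s : Fin n → Fin k) (b : Fin n) (j : Fin k) :
    ∑ a₀, (X (j, a₀) : MvPolynomial (Fin k × Fin n) ℝ) * cofac s b a₀
      = hdet (Function.update s b j) := by
  classical
  have hcol : (fun a => (X (j, a) : MvPolynomial (Fin k × Fin n) ℝ))
      = ∑ a₀ : Fin n, (X (j, a₀) : MvPolynomial (Fin k × Fin n) ℝ) •
          (fun a => if a = a₀ then (1 : MvPolynomial (Fin k × Fin n) ℝ) else 0) := by
    funext a
    simp only [Finset.sum_apply, Pi.smul_apply, smul_eq_mul, mul_ite, mul_one, mul_zero]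
    rw [Finset.sum_ite_eq Finset.univ a (fun a₀ => (X (j, a₀) : MvPolynomial (Fin k × Fin n) ℝ))]
    simp
  have h2 : hdet (Function.update s b j)
      = ((matv s).updateCol b (fun a => (X (j, a) : MvPolynomial (Fin k × Fin n) ℝ))).det := by
    rw [hdet_eq]
    congr 1
    apply Matrix.ext; intro a b'
    rw [Matrix.updateCol_apply]
    by_cases h : b' = b
    · rw [if_pos h]
      show (X (Function.update s b j b', a) : MvPolynomial (Fin k × Fin n) ℝ) = _
      rw [h, Function.update_self]
    · rw [if_neg h]
      show (X (Function.update s b j b', a) : MvPolynomial (Fin k × Fin n) ℝ) = X (s b', a)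
      rw [Function.update_of_ne h]
  rw [h2, hcol, det_updateColumn_finset_sum]
  refine Finset.sum_congr rfl fun a₀ _ => ?_
  rw [Matrix.det_updateCol_smul]
  rfl

lemma key3 {n k : ℕ} (i j c : Fin k) (a₀ : Fin n) :
    pderiv (c, a₀) (fpair (n := n) i j)
      = (if c = i then X (j, a₀) else 0) + (if c = j then X (i, a₀) else 0) := by
  unfold fpair
  rw [map_sum]
  have h1 : ∀ a : Fin n,
      pderiv ((c, a₀)) (X (i, a) * X (j, a) : MvPolynomial (Fin k × Fin n) ℝ)
      = (if c = i ∧ a₀ = a then X (j, a) else 0)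
        + (if c = j ∧ a₀ = a then X (i, a) else 0) := by
    intro a
    rw [pderiv_mul, pderiv_X, pderiv_X, Pi.single_apply, Pi.single_apply]
    by_cases h1 : (i, a) = ((c, a₀) : Fin k × Fin n) <;>
      by_cases h2 : (j, a) = ((c, a₀) : Fin k × Fin n) <;>
      simp_all [Prod.ext_iff, eq_comm]
  simp only [h1, Finset.sum_add_distrib]
  have hsum : ∀ (p : Prop) [Decidable p] (f : Fin n → MvPolynomial (Fin k × Fin n) ℝ),
      (∑ x, if p ∧ a₀ = x then f x else 0) = if p then f a₀ else 0 := by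
    intro p _ f
    by_cases hp : p <;> simp [hp, Finset.sum_ite_eq]
  congr 1 <;> exact hsum _ _

/-- ⟨∇f_{ij}, ∇h_S⟩ vanishes if |S ∩ {i,j}| is 0 or 2, and equals
± h_{(S∖{i})∪{j}} if i ∈ S and j ∉ S. -/
theorem gradInner_fpair_hdet {n k : ℕ} (s : Fin n → Fin k)
    (hs : Function.Injective s) (i j : Fin k) :
    ((∀ a, s a ≠ i) → (∀ a, s a ≠ j) →
      gradInner (fpair (n := n) i j) (hdet s) = 0) ∧
    (i ≠ j → (∃ a, s a = i) → (∃ b, s b = j) →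
      gradInner (fpair (n := n) i j) (hdet s) = 0) ∧
    (∀ a, s a = i → (∀ b, s b ≠ j) →
      ∃ ε : ℝ, (ε = 1 ∨ ε = -1) ∧
        gradInner (fpair (n := n) i j) (hdet s) =
          C ε * hdet (Function.update s a j)) := by
  have main : gradInner (fpair (n := n) i j) (hdet s)
      = (∑ a₀, X (j, a₀) * pderiv ((i, a₀)) (hdet s))
        + (∑ a₀, X (i, a₀) * pderiv ((j, a₀)) (hdet s)) := by
    unfold gradInner
    rw [Fintype.sum_prod_type]
    simp only [key3, add_mul, ite_mul, zero_mul, Finset.sum_add_distrib]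
    congr 1 <;>
    · rw [Finset.sum_comm]
      refine Finset.sum_congr rfl fun a₀ _ => ?_
      rw [Finset.sum_ite_eq' Finset.univ]
      simp
  have phzero : ∀ c : Fin k, (∀ a, s a ≠ c) → ∀ a₀ : Fin n,
      pderiv ((c, a₀)) (hdet s) = 0 := by
    intro c h a₀
    rw [key1]
    exact Finset.sum_eq_zero fun b _ => if_neg (h b)
  have keyArg : ∀ (a : Fin n) (c j' : Fin k), s a = c →
      (∑ a₀, (X (j', a₀) : MvPolynomial (Fin k × Fin n) ℝ) * pderiv ((c, a₀)) (hdet s))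
        = hdet (Function.update s a j') := by
    intro a c j' hac
    have hph : ∀ a₀, pderiv ((c, a₀)) (hdet s) = cofac s a a₀ := by
      intro a₀
      rw [key1, Finset.sum_eq_single a]
      · rw [if_pos hac]
      · intro b _ hb
        exact if_neg (fun h => hb (hs (h.trans hac.symm)))
      · simp
    simp only [hph]
    exact key2 s a j'
  have hdet_zero : ∀ (s' : Fin n → Fin k) (a b : Fin n), a ≠ b → s' a = s' b →
      hdet s' = 0 := by
    intro s' a b hab he
    exact Matrix.det_zero_of_column_eq hab
      (fun r => by show (X (s' a, r) : MvPolynomial (Fin k × Fin n) ℝ) = X (s' b, r); rw [he])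
  refine ⟨fun hi hj => ?_, fun hij hi hj => ?_, fun a ha hj => ?_⟩
  · rw [main]
    simp [phzero i hi, phzero j hj]
  · obtain ⟨a, ha⟩ := hi
    obtain ⟨b, hb⟩ := hj
    have hab : a ≠ b := by rintro rfl; exact hij (ha ▸ hb ▸ rfl)
    rw [main, keyArg a i j ha, keyArg b j i hb]
    rw [hdet_zero (Function.update s a j) a b
        (by exact hab)
        (by rw [Function.update_self, Function.update_of_ne (Ne.symm hab), hb]),
      hdet_zero (Function.update s b i) b a
        (by exact hab.symm)
        (by rw [Function.update_self, Function.update_of_ne hab, ha])]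
    simp
  · refine ⟨1, Or.inl rfl, ?_⟩
    rw [main, keyArg a i j ha]
    simp [phzero j hj]
end

section
/- Let F(x₁,…,x_k) = f(xᵢ) for a homogeneous polynomial f on ℝ^n, and let P_{j i} = Σ_a x_j^a ∂/∂x_i^a be the classical polarization operator on ℝ[(ℝ^n)^k]. Then for any polynomial H on (ℝ^n)^k, ⟨∇(P_{ji}F), ∇H⟩ = P^f_{ij}(H) + Σ_{a,b} x_j^a (∂²f/∂x^a∂x^b)(xᵢ) (∂H/∂xᵢ^b), where P^f_{ij}(H) = Σ_a (∂f/∂x^a)(xᵢ) ∂H/∂x_j^a is the Wallach polarization of H. -/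
open MvPolynomial

/-- F(x₁,…,x_k) = f(xᵢ): the single-variable polynomial f placed in slot i. -/
noncomputable def slot {n k : ℕ} (i : Fin k) (f : MvPolynomial (Fin n) ℝ) :
    MvPolynomial (Fin k × Fin n) ℝ :=
  rename (fun a => (i, a)) f

/-- The classical polarization operator P_{ji} = Σ_a x_j^a ∂/∂x_i^a. -/
noncomputable def classicalPol {n k : ℕ} (j i : Fin k)
    (H : MvPolynomial (Fin k × Fin n) ℝ) : MvPolynomial (Fin k × Fin n) ℝ :=
  ∑ a : Fin n, X (j, a) * pderiv (i, a) H

/-- The Wallach polarization operator P^f_{ij}(H) = Σ_a (∂f/∂x^a)(xᵢ)·∂H/∂x_j^a. -/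
noncomputable def wallachPol {n k : ℕ} (f : MvPolynomial (Fin n) ℝ)
    (i j : Fin k) (H : MvPolynomial (Fin k × Fin n) ℝ) :
    MvPolynomial (Fin k × Fin n) ℝ :=
  ∑ a : Fin n, slot i (pderiv a f) * pderiv (j, a) H

lemma slot_inj {n k : ℕ} (i : Fin k) :
    Function.Injective (fun a : Fin n => (i, a)) := fun a b h => by
  simpa using h

lemma pderiv_slot {n k : ℕ} (i : Fin k) (f : MvPolynomial (Fin n) ℝ)
    (c : Fin k × Fin n) :
    pderiv c (slot i f) = if c.1 = i then slot i (pderiv c.2 f) else 0 := by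
  obtain ⟨c1, c2⟩ := c
  by_cases h : c1 = i
  · subst h
    simpa [slot] using pderiv_rename (slot_inj c1) c2 f
  · simp only [h, if_false]
    apply pderiv_eq_zero_of_notMem_vars
    intro hmem
    have := MvPolynomial.vars_rename (fun a : Fin n => (i, a)) f (by simpa [slot] using hmem)
    simp only [Finset.mem_image] at this
    obtain ⟨a, -, ha⟩ := this
    exact h (by simpa using congrArg Prod.fst ha.symm)

lemma pderiv_pderiv_comm {n : ℕ} (a b : Fin n) (f : MvPolynomial (Fin n) ℝ) :
    pderiv a (pderiv b f) = pderiv b (pderiv a f) := by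
  rcases eq_or_ne a b with rfl | h
  · rfl
  · induction f using MvPolynomial.induction_on' with
    | monomial s c =>
      simp only [pderiv_monomial, Finsupp.tsub_apply, Finsupp.single_apply,
        if_neg h, if_neg h.symm, tsub_zero, tsub_right_comm]
      ring_nf
    | add p q hp hq => simp [hp, hq]

/-- ⟨∇(P_{ji}F), ∇H⟩ = P^f_{ij}(H) + Σ_{a,b} x_j^a·f_{ab}(xᵢ)·∂H/∂xᵢ^b. -/
theorem gradInner_classicalPol {n k d : ℕ} (i j : Fin k)
    (f : MvPolynomial (Fin n) ℝ) (hf : f.IsHomogeneous d)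
    (H : MvPolynomial (Fin k × Fin n) ℝ) :
    gradInner (classicalPol j i (slot i f)) H =
      wallachPol f i j H +
        ∑ a : Fin n, ∑ b : Fin n,
          X (j, a) * slot i (pderiv a (pderiv b f)) * pderiv (i, b) H := by
  have key : ∀ a : Fin n, pderiv (i, a) (slot i f) = slot i (pderiv a f) := by
    intro a; rw [pderiv_slot]; simp
  unfold gradInner classicalPol wallachPol
  simp only [key, map_sum, pderiv_mul, pderiv_slot, pderiv_X, Pi.single_apply,
    ite_mul, one_mul, zero_mul, mul_ite, mul_zero, add_mul,
    Finset.sum_add_distrib, Finset.sum_mul]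
  congr 1
  · rw [Finset.sum_comm]
    simp [Finset.sum_ite_eq]
  · rw [Fintype.sum_prod_type]
    rw [Finset.sum_eq_single i (fun c _ hc => by simp [hc]) (by simp)]
    simp only [if_pos rfl]
    rw [Finset.sum_comm]
    exact Finset.sum_congr rfl fun y _ => Finset.sum_congr rfl fun x _ => by
      rw [if_pos trivial, pderiv_pderiv_comm]
end
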